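/- Let S, I, R, B : [0,∞) → ℝ be a solution of the SIRB system S' = −βSI, I' = βSI − γI + βσαIR, R' = γI − βσIR, B' = βσ(1−α)IR with β>0, γ>0, σ>0, 0<α<1, initial conditions S(0)>0, I(0)>0, R(0)≥0, B(0)≥0, S(0)+I(0)+R(0)+B(0)=1, and suppose S(t)>0 and I(t)>0 for all t≥0. Then for every t≥0, R(t) = (γ/(σβ))·(1 − (1 − (σβ/γ)·R(0))·(S(t)/S(0))^σ). -/

import Mathlib

/-- Along solutions of the SIRB system, the recovered proportion is
determined by the susceptible proportion:
`R t = (γ/(σβ))·(1 − (1 − (σβ/γ)·R 0)·(S t / S 0)^σ)` for all `t ≥ 0`. -/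
theorem sirb_R_in_terms_of_S (β γ σ α : ℝ) (S I R B : ℝ → ℝ)
    (hβ : 0 < β) (hγ : 0 < γ) (hσ : 0 < σ) (hα0 : 0 < α) (hα1 : α < 1)
    (hS' : ∀ t : ℝ, 0 ≤ t → HasDerivAt S (-(β * S t * I t)) t)
    (hI' : ∀ t : ℝ, 0 ≤ t → HasDerivAt I (β * S t * I t - γ * I t + β * σ * α * I t * R t) t)
    (hR' : ∀ t : ℝ, 0 ≤ t → HasDerivAt R (γ * I t - β * σ * I t * R t) t)
    (hB' : ∀ t : ℝ, 0 ≤ t → HasDerivAt B (β * σ * (1 - α) * I t * R t) t)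
    (hS0 : 0 < S 0) (hI0 : 0 < I 0) (hR0 : 0 ≤ R 0) (hB0 : 0 ≤ B 0)
    (hsum : S 0 + I 0 + R 0 + B 0 = 1)
    (hSpos : ∀ t : ℝ, 0 ≤ t → 0 < S t) (hIpos : ∀ t : ℝ, 0 ≤ t → 0 < I t) :
    ∀ t : ℝ, 0 ≤ t →
      R t = γ / (σ * β) * (1 - (1 - σ * β / γ * R 0) * (S t / S 0) ^ σ) := by
  intro t ht
  set C : ℝ := γ / (σ * β) with hC
  have hσβ : σ * β ≠ 0 := by positivity
  have hCval : β * σ * C = γ := by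
    rw [hC]; field_simp
  clear_value C
  have key : ∀ s : ℝ, 0 ≤ s →
      HasDerivAt (fun u => (R u - C) * S u ^ (-σ)) 0 s := by
    intro s hs
    have hSs := hSpos s hs
    have h1 : HasDerivAt (fun u => S u ^ (-σ))
        (-(β * S s * I s) * (-σ) * S s ^ (-σ - 1)) s :=
      (hS' s hs).rpow_const (Or.inl hSs.ne')
    have h2 : HasDerivAt (fun u => R u - C) (γ * I s - β * σ * I s * R s) s :=
      (hR' s hs).sub_const C
    have h3 := h2.mul h1
    refine h3.congr_deriv (Eq.symm ?_)
    have hpow : S s ^ (-σ) = S s * S s ^ (-σ - 1) := by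
      have h := Real.rpow_add hSs 1 (-σ - 1)
      rw [show (1:ℝ) + (-σ - 1) = -σ by ring, Real.rpow_one] at h
      exact h
    rw [hpow]
    linear_combination (S s * I s * S s ^ (-σ - 1)) * hCval
  have hconst : (R t - C) * S t ^ (-σ) = (R 0 - C) * S 0 ^ (-σ) := by
    apply constant_of_has_deriv_right_zero
      (f := fun u => (R u - C) * S u ^ (-σ)) (a := 0) (b := t)
    · exact fun s hs => ((key s hs.1).continuousAt).continuousWithinAt
    · exact fun s hs => (key s hs.1).hasDerivWithinAt
    · exact ⟨ht, le_refl t⟩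
  have hSt := hSpos t ht
  have hPt : (0:ℝ) < S t ^ σ := Real.rpow_pos_of_pos hSt σ
  have hP0 : (0:ℝ) < S 0 ^ σ := Real.rpow_pos_of_pos hS0 σ
  have hdiv : (S t / S 0) ^ σ = S t ^ σ / S 0 ^ σ :=
    Real.div_rpow hSt.le hS0.le σ
  rw [Real.rpow_neg hSt.le, Real.rpow_neg hS0.le] at hconst
  rw [hdiv, hC]
  rw [hC] at hconst
  field_simp at hconst ⊢
  have hconst2 : (R t * (σ * β) - γ) * S 0 ^ σ = (R 0 * (σ * β) - γ) * S t ^ σ :=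
    by linear_combination hconst
  linear_combination hconst2
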